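/- arXiv:1512.05076 — 2 statements merged into one kernel-verified Lean document; each statement's English description precedes it below -/
import Mathlib

section
/- The 5×5 complex matrices b⁺ = √2(E₃₅ + E₄₃) and b⁻ = √2(E₃₄ − E₅₃) satisfy the single-mode paraboson triple relations: [{b⁺,b⁻}, b⁺] = 2b⁺, [{b⁺,b⁻}, b⁻] = −2b⁻, [{b⁺,b⁺}, b⁻] = −4b⁺, [{b⁻,b⁻}, b⁺] = 4b⁻, [{b⁺,b⁺}, b⁺] = 0, [{b⁻,b⁻}, b⁻] = 0. -/
open Matrix Complex

noncomputable section

abbrev M5 := Matrix (Fin 5) (Fin 5) ℂ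

def E (i j : Fin 5) : M5 := Matrix.single i j 1

def fp : M5 := (Real.sqrt 2 : ℂ) • (E 0 2 - E 2 1)
def fm : M5 := (Real.sqrt 2 : ℂ) • (E 2 0 - E 1 2)
def bp : M5 := (Real.sqrt 2 : ℂ) • (E 2 4 + E 3 2)
def bm : M5 := (Real.sqrt 2 : ℂ) • (E 2 3 - E 4 2)

def lb (A B : M5) : M5 := A * B - B * A
def ab (A B : M5) : M5 := A * B + B * A

lemma s2 : ((Real.sqrt 2 : ℂ)) * (Real.sqrt 2 : ℂ) = 2 := by
  rw [← Complex.ofReal_mul]; norm_num [Real.mul_self_sqrt]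

lemma s2' : ((Real.sqrt 2 : ℂ)) ^ 2 = 2 := by rw [sq, s2]

lemma Emul (i j k l : Fin 5) : E i j * E k l = if j = k then E i l else 0 := by
  by_cases h : j = k
  · subst h; simp [E]
  · simp [E, Matrix.single_mul_single_of_ne i j k h 1 (c := 1), h]

/-- Single-mode paraboson triple relations for the 5×5 matrices b⁺, b⁻. -/
theorem paraboson_triple_relations :
    lb (ab bp bm) bp = (2 : ℂ) • bp ∧
    lb (ab bp bm) bm = (-2 : ℂ) • bm ∧
    lb (ab bp bp) bm = (-4 : ℂ) • bp ∧
    lb (ab bm bm) bp = (4 : ℂ) • bm ∧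
    lb (ab bp bp) bp = 0 ∧
    lb (ab bm bm) bm = 0 := by
  refine ⟨?_, ?_, ?_, ?_, ?_, ?_⟩ <;>
  · simp only [lb, ab, bp, bm]
    simp (config := { decide := true }) [Emul, mul_add, add_mul, mul_sub, sub_mul,
      smul_mul_assoc, mul_smul_comm, smul_smul, s2, s2', smul_add, smul_sub, Fin.ext_iff]
    try module
end
end

section
/- Define a₁^± = (1/(2√3))[c₁⁻ − c₁⁺, c₂^±], a₂^± = (i/(2√3))[c₁⁻ + c₁⁺, c₂^±], a₃^± = (1/√3)c₂^±, where c₁^± = f^±, c₂^± = b^± are the 5×5 matrices above. Then for each k ∈ {1,2,3}: Σᵢ₌₁³ [{aᵢ⁺, aᵢ⁻}, a_k^±] = ±2 a_k^± (the compatibility conditions for the Wigner quantum oscillator). -/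
open Matrix Complex

noncomputable section

def s3 : ℂ := (Real.sqrt 3 : ℂ)

def aP : Fin 3 → M5 :=
  ![ (1/(2*s3)) • lb (fm - fp) bp,
     (Complex.I/(2*s3)) • lb (fm + fp) bp,
     (1/s3) • bp ]

def aM : Fin 3 → M5 :=
  ![ (1/(2*s3)) • lb (fm - fp) bm,
     (Complex.I/(2*s3)) • lb (fm + fp) bm,
     (1/s3) • bm ]

lemma h2 : ((Real.sqrt 2 : ℝ) : ℂ) * ((Real.sqrt 2 : ℝ) : ℂ) = 2 := by
  rw [← Complex.ofReal_mul, Real.mul_self_sqrt (by norm_num)]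
  norm_num

lemma hs3 : s3 * s3 = 3 := by
  rw [s3, ← Complex.ofReal_mul, Real.mul_self_sqrt (by norm_num)]
  norm_num

lemma lb_smul (a b : ℂ) (A B : M5) : lb (a • A) (b • B) = (a * b) • lb A B := by
  simp only [lb, Matrix.smul_mul, Matrix.mul_smul, smul_smul, smul_sub, mul_comm]

lemma ab_smul (a b : ℂ) (A B : M5) : ab (a • A) (b • B) = (a * b) • ab A B := by
  simp only [ab, Matrix.smul_mul, Matrix.mul_smul, smul_smul, smul_add, mul_comm]

/- explicit forms of the commutators -/

lemma L1p : lb (fm - fp) bp = (-2 : ℂ) • (E 0 4 + E 1 4 + E 3 0 + E 3 1) := by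
  simp only [lb, fm, fp, bp]
  rw [← smul_sub]
  simp only [Matrix.smul_mul, Matrix.mul_smul, smul_smul, h2]
  simp only [sub_mul, mul_sub, add_mul, mul_add, Emul]
  simp (config := { decide := true }) only [Emul, if_true, if_false,
    sub_zero, zero_sub, add_zero, zero_add, neg_neg, neg_zero]
  module

lemma L2p : lb (fm + fp) bp = (2 : ℂ) • (E 0 4 - E 1 4 - E 3 0 + E 3 1) := by
  simp only [lb, fm, fp, bp]
  rw [← smul_add]
  simp only [Matrix.smul_mul, Matrix.mul_smul, smul_smul, h2]
  simp only [sub_mul, mul_sub, add_mul, mul_add, Emul]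
  simp (config := { decide := true }) only [Emul, if_true, if_false,
    sub_zero, zero_sub, add_zero, zero_add, neg_neg, neg_zero]
  module

lemma L1m : lb (fm - fp) bm = (-2 : ℂ) • (E 0 3 + E 1 3 - E 4 0 - E 4 1) := by
  simp only [lb, fm, fp, bm]
  rw [← smul_sub]
  simp only [Matrix.smul_mul, Matrix.mul_smul, smul_smul, h2]
  simp only [sub_mul, mul_sub, add_mul, mul_add, Emul]
  simp (config := { decide := true }) only [Emul, if_true, if_false,
    sub_zero, zero_sub, add_zero, zero_add, neg_neg, neg_zero]
  module

lemma L2m : lb (fm + fp) bm = (2 : ℂ) • (E 0 3 - E 1 3 + E 4 0 - E 4 1) := by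
  simp only [lb, fm, fp, bm]
  rw [← smul_add]
  simp only [Matrix.smul_mul, Matrix.mul_smul, smul_smul, h2]
  simp only [sub_mul, mul_sub, add_mul, mul_add, Emul]
  simp (config := { decide := true }) only [Emul, if_true, if_false,
    sub_zero, zero_sub, add_zero, zero_add, neg_neg, neg_zero]
  module

/- explicit forms of the a's -/

lemma eP0 : aP 0 = (-(1/s3)) • (E 0 4 + E 1 4 + E 3 0 + E 3 1) := by
  show (1/(2*s3)) • lb (fm - fp) bp = _
  rw [L1p]; module

lemma eP1 : aP 1 = (Complex.I/s3) • (E 0 4 - E 1 4 - E 3 0 + E 3 1) := by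
  show (Complex.I/(2*s3)) • lb (fm + fp) bp = _
  rw [L2p]; module

lemma eP2 : aP 2 = (((Real.sqrt 2 : ℝ) : ℂ)/s3) • (E 2 4 + E 3 2) := by
  show (1/s3) • bp = _
  rw [bp]; module

lemma eM0 : aM 0 = (-(1/s3)) • (E 0 3 + E 1 3 - E 4 0 - E 4 1) := by
  show (1/(2*s3)) • lb (fm - fp) bm = _
  rw [L1m]; module

lemma eM1 : aM 1 = (Complex.I/s3) • (E 0 3 - E 1 3 + E 4 0 - E 4 1) := by
  show (Complex.I/(2*s3)) • lb (fm + fp) bm = _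
  rw [L2m]; module

lemma eM2 : aM 2 = (((Real.sqrt 2 : ℝ) : ℂ)/s3) • (E 2 3 - E 4 2) := by
  show (1/s3) • bm = _
  rw [bm]; module

/- anticommutators of the pure E-parts -/

lemma hab0 : ab (E 0 4 + E 1 4 + E 3 0 + E 3 1) (E 0 3 + E 1 3 - E 4 0 - E 4 1)
    = (2 : ℂ) • (E 3 3 - E 4 4) := by
  simp only [ab, sub_mul, mul_sub, add_mul, mul_add, Emul]
  simp (config := { decide := true }) only [Emul, if_true, if_false,
    sub_zero, zero_sub, add_zero, zero_add, neg_neg, neg_zero]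
  module

lemma hab1 : ab (E 0 4 - E 1 4 - E 3 0 + E 3 1) (E 0 3 - E 1 3 + E 4 0 - E 4 1)
    = (-2 : ℂ) • (E 3 3 - E 4 4) := by
  simp only [ab, sub_mul, mul_sub, add_mul, mul_add, Emul]
  simp (config := { decide := true }) only [Emul, if_true, if_false,
    sub_zero, zero_sub, add_zero, zero_add, neg_neg, neg_zero]
  module

lemma hab2 : ab (E 2 4 + E 3 2) (E 2 3 - E 4 2) = E 3 3 - E 4 4 := by
  simp only [ab, sub_mul, mul_sub, add_mul, mul_add, Emul]
  simp (config := { decide := true }) only [Emul, if_true, if_false,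
    sub_zero, zero_sub, add_zero, zero_add, neg_neg, neg_zero]
  module

lemma key : ∑ i : Fin 3, ab (aP i) (aM i) = (2 : ℂ) • (E 3 3 - E 4 4) := by
  rw [Fin.sum_univ_three, eP0, eM0, eP1, eM1, eP2, eM2,
    ab_smul, ab_smul, ab_smul, hab0, hab1, hab2]
  have k1 : (-(1/s3)) * (-(1/s3)) = 1/3 := by
    rw [neg_mul_neg, div_mul_div_comm, one_mul, hs3]
  have k2 : (Complex.I/s3) * (Complex.I/s3) = -(1/3) := by
    rw [div_mul_div_comm, Complex.I_mul_I, hs3]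
    ring
  have k3 : (((Real.sqrt 2 : ℝ) : ℂ)/s3) * (((Real.sqrt 2 : ℝ) : ℂ)/s3) = 2/3 := by
    rw [div_mul_div_comm, h2, hs3]
  rw [k1, k2, k3]
  module

/- commutation with the number operator -/

lemma hcP0 : lb (E 3 3 - E 4 4) (E 0 4 + E 1 4 + E 3 0 + E 3 1)
    = E 0 4 + E 1 4 + E 3 0 + E 3 1 := by
  simp only [lb, sub_mul, mul_sub, add_mul, mul_add, Emul]
  simp (config := { decide := true }) only [Emul, if_true, if_false,
    sub_zero, zero_sub, add_zero, zero_add, neg_neg, neg_zero]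
  module

lemma hcP1 : lb (E 3 3 - E 4 4) (E 0 4 - E 1 4 - E 3 0 + E 3 1)
    = E 0 4 - E 1 4 - E 3 0 + E 3 1 := by
  simp only [lb, sub_mul, mul_sub, add_mul, mul_add, Emul]
  simp (config := { decide := true }) only [Emul, if_true, if_false,
    sub_zero, zero_sub, add_zero, zero_add, neg_neg, neg_zero]
  module

lemma hcP2 : lb (E 3 3 - E 4 4) (E 2 4 + E 3 2) = E 2 4 + E 3 2 := by
  simp only [lb, sub_mul, mul_sub, add_mul, mul_add, Emul]
  simp (config := { decide := true }) only [Emul, if_true, if_false,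
    sub_zero, zero_sub, add_zero, zero_add, neg_neg, neg_zero]
  module

lemma hcM0 : lb (E 3 3 - E 4 4) (E 0 3 + E 1 3 - E 4 0 - E 4 1)
    = -(E 0 3 + E 1 3 - E 4 0 - E 4 1) := by
  simp only [lb, sub_mul, mul_sub, add_mul, mul_add, Emul]
  simp (config := { decide := true }) only [Emul, if_true, if_false,
    sub_zero, zero_sub, add_zero, zero_add, neg_neg, neg_zero]
  module

lemma hcM1 : lb (E 3 3 - E 4 4) (E 0 3 - E 1 3 + E 4 0 - E 4 1)
    = -(E 0 3 - E 1 3 + E 4 0 - E 4 1) := by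
  simp only [lb, sub_mul, mul_sub, add_mul, mul_add, Emul]
  simp (config := { decide := true }) only [Emul, if_true, if_false,
    sub_zero, zero_sub, add_zero, zero_add, neg_neg, neg_zero]
  module

lemma hcM2 : lb (E 3 3 - E 4 4) (E 2 3 - E 4 2) = -(E 2 3 - E 4 2) := by
  simp only [lb, sub_mul, mul_sub, add_mul, mul_add, Emul]
  simp (config := { decide := true }) only [Emul, if_true, if_false,
    sub_zero, zero_sub, add_zero, zero_add, neg_neg, neg_zero]
  module

lemma lbsum (g : Fin 3 → M5) (X : M5) :
    ∑ i : Fin 3, lb (g i) X = lb (∑ i : Fin 3, g i) X := by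
  simp only [Fin.sum_univ_three, lb]
  noncomm_ring

lemma stepP (c : ℂ) (X : M5) (h : lb (E 3 3 - E 4 4) X = X) :
    lb ((2 : ℂ) • (E 3 3 - E 4 4)) (c • X) = (2 : ℂ) • (c • X) := by
  rw [lb_smul, h]
  module

lemma stepM (c : ℂ) (X : M5) (h : lb (E 3 3 - E 4 4) X = -X) :
    lb ((2 : ℂ) • (E 3 3 - E 4 4)) (c • X) = (-2 : ℂ) • (c • X) := by
  rw [lb_smul, h]
  module

/-- Wigner compatibility conditions: Σᵢ [{aᵢ⁺, aᵢ⁻}, a_k^±] = ±2 a_k^±. -/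
theorem wigner_compatibility (k : Fin 3) :
    (∑ i : Fin 3, lb (ab (aP i) (aM i)) (aP k)) = (2 : ℂ) • aP k ∧
    (∑ i : Fin 3, lb (ab (aP i) (aM i)) (aM k)) = (-2 : ℂ) • aM k := by
  constructor
  · rw [lbsum, key]
    fin_cases k
    · show lb ((2 : ℂ) • (E 3 3 - E 4 4)) (aP 0) = (2 : ℂ) • aP 0
      rw [eP0]; exact stepP _ _ hcP0
    · show lb ((2 : ℂ) • (E 3 3 - E 4 4)) (aP 1) = (2 : ℂ) • aP 1
      rw [eP1]; exact stepP _ _ hcP1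
    · show lb ((2 : ℂ) • (E 3 3 - E 4 4)) (aP 2) = (2 : ℂ) • aP 2
      rw [eP2]; exact stepP _ _ hcP2
  · rw [lbsum, key]
    fin_cases k
    · show lb ((2 : ℂ) • (E 3 3 - E 4 4)) (aM 0) = (-2 : ℂ) • aM 0
      rw [eM0]; exact stepM _ _ hcM0
    · show lb ((2 : ℂ) • (E 3 3 - E 4 4)) (aM 1) = (-2 : ℂ) • aM 1
      rw [eM1]; exact stepM _ _ hcM1
    · show lb ((2 : ℂ) • (E 3 3 - E 4 4)) (aM 2) = (-2 : ℂ) • aM 2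
      rw [eM2]; exact stepM _ _ hcM2
end
end
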